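/- arXiv:math/0304106 — 3 statements merged into one kernel-verified Lean document; each statement's English description precedes it below -/
import Mathlib

section
/- Let f : [0,1] → [0,1] be a regular homeomorphism that is strictly increasing (equivalently, f(0) = 0 and f(1) = 1). Then f is the identity map of [0,1]. -/
/-! The group of self-homeomorphisms of a topological space, with the uniform
metric `d(f,g) = max_{x} d (f x) (g x)` (induced from `C(X, X)`) when the space
is compact metric. -/

instance Homeomorph.instGroup' {X : Type*} [TopologicalSpace X] : Group (X ≃ₜ X) where
  mul f g := g.trans f
  one := Homeomorph.refl X
  inv := Homeomorph.symm
  mul_assoc _ _ _ := rfl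
  one_mul _ := rfl
  mul_one _ := rfl
  inv_mul_cancel f := Homeomorph.ext fun x => f.symm_apply_apply x

@[simp] theorem Homeomorph.mul_apply' {X : Type*} [TopologicalSpace X] (f g : X ≃ₜ X) (x : X) :
    (f * g) x = f (g x) := rfl

@[simp] theorem Homeomorph.one_apply' {X : Type*} [TopologicalSpace X] (x : X) :
    (1 : X ≃ₜ X) x = x := rfl

noncomputable instance Homeomorph.instMetricSpace {Y : Type*} [MetricSpace Y] [CompactSpace Y] :
    MetricSpace (Y ≃ₜ Y) :=
  MetricSpace.induced (fun f => (f : C(Y, Y)))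
    (fun _ _ h => Homeomorph.ext fun x => ContinuousMap.congr_fun h x)
    inferInstance

lemma regular_increasing_homeo_unitInterval_le (f : unitInterval ≃ₜ unitInterval)
    (hreg : UniformEquicontinuous fun n : ℤ => ((f ^ n : unitInterval ≃ₜ unitInterval) :
      unitInterval → unitInterval))
    (hmono : StrictMono (f : unitInterval → unitInterval)) :
    ∀ x, f x ≤ x := by
  by_contra hcon
  push_neg at hcon
  obtain ⟨x₀, hx₀⟩ := hcon
  -- the inverse is strictly monotone
  have hinv : StrictMono (f.symm : unitInterval → unitInterval) := fun a b h => by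
    rw [← hmono.lt_iff_lt]
    simpa using h
  -- every integer power is monotone
  have hpow : ∀ n : ℤ, Monotone ((f ^ n : unitInterval ≃ₜ unitInterval) :
      unitInterval → unitInterval) := by
    intro n
    induction n using Int.induction_on with
    | zero => exact fun a b h => by simpa using h
    | succ k ih =>
        rw [zpow_add_one]
        intro a b h
        simp only [Homeomorph.mul_apply']
        exact ih (hmono.monotone h)
    | pred k ih =>
        rw [zpow_sub_one]
        intro a b h
        simp only [Homeomorph.mul_apply']
        exact ih (hinv.monotone h)
  -- forward and backward orbits
  set s : ℕ → unitInterval := fun n => (f ^ (n : ℤ)) x₀ with hs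
  set t : ℕ → unitInterval := fun n => (f ^ (-(n : ℤ))) x₀ with ht
  have hs_succ : ∀ n : ℕ, s (n + 1) = (f ^ (n : ℤ)) (f x₀) := by
    intro n
    have h1 : ((n : ℤ) + 1) = ((n + 1 : ℕ) : ℤ) := by push_cast; ring
    have : (f ^ ((n : ℤ) + 1)) x₀ = (f ^ (n : ℤ)) (f x₀) := by
      rw [zpow_add_one, Homeomorph.mul_apply']
    rw [hs]; dsimp only; rw [← h1, this]
  have ht_succ : ∀ n : ℕ, t (n + 1) = (f ^ (-(n : ℤ))) (f.symm x₀) := by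
    intro n
    have h1 : (-(n : ℤ) - 1) = (-((n + 1 : ℕ) : ℤ)) := by push_cast; ring
    have : (f ^ (-(n : ℤ) - 1)) x₀ = (f ^ (-(n : ℤ))) (f⁻¹ x₀) := by
      rw [zpow_sub_one, Homeomorph.mul_apply']
    rw [ht]; dsimp only; rw [← h1, this]; rfl
  have hs_mono : Monotone s := by
    apply monotone_nat_of_le_succ
    intro n
    rw [hs_succ n]
    exact hpow (n : ℤ) hx₀.le
  have hsymm_lt : f.symm x₀ < x₀ := by
    rw [← hmono.lt_iff_lt]
    simpa using hx₀
  have ht_anti : Antitone t := by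
    apply antitone_nat_of_succ_le
    intro n
    rw [ht_succ n]
    exact hpow (-(n : ℤ)) hsymm_lt.le
  -- real-valued versions
  set sr : ℕ → ℝ := fun n => ((s n : unitInterval) : ℝ) with hsr
  set tr : ℕ → ℝ := fun n => ((t n : unitInterval) : ℝ) with htr
  have hsr_mono : Monotone sr := fun a b h => Subtype.coe_le_coe.2 (hs_mono h)
  have htr_anti : Antitone tr := fun a b h => Subtype.coe_le_coe.2 (ht_anti h)
  set p : ℝ := ⨆ n, sr n with hp
  set q : ℝ := ⨅ n, tr n with hq
  have hsr_bdd : BddAbove (Set.range sr) := ⟨1, by rintro _ ⟨n, rfl⟩; exact (s n).2.2⟩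
  have htr_bdd : BddBelow (Set.range tr) := ⟨0, by rintro _ ⟨n, rfl⟩; exact (t n).2.1⟩
  have hsr_tendsto : Filter.Tendsto sr Filter.atTop (nhds p) :=
    tendsto_atTop_ciSup hsr_mono hsr_bdd
  have htr_tendsto : Filter.Tendsto tr Filter.atTop (nhds q) :=
    tendsto_atTop_ciInf htr_anti htr_bdd
  have hq_le : ∀ n, q ≤ tr n := fun n => ciInf_le htr_bdd n
  have hle_p : ∀ n, sr n ≤ p := fun n => le_ciSup hsr_bdd n
  have ht0 : t 0 = x₀ := by simp [ht]; rfl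
  have hs0 : s 0 = x₀ := by simp [hs]
  have hs1 : s 1 = f x₀ := by
    have := hs_succ 0
    simpa using this
  have hq_le_x₀ : q ≤ (x₀ : ℝ) := by
    simpa [htr, ht0] using hq_le 0
  have hfx₀_le_p : ((f x₀ : unitInterval) : ℝ) ≤ p := by
    simpa [hsr, hs1] using hle_p 1
  have hx₀_lt : ((x₀ : unitInterval) : ℝ) < ((f x₀ : unitInterval) : ℝ) :=
    Subtype.coe_lt_coe.2 hx₀
  have hqp : q < p := lt_of_le_of_lt hq_le_x₀ (lt_of_lt_of_le hx₀_lt hfx₀_le_p)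
  -- q belongs to the unit interval
  have hq_mem : q ∈ unitInterval := by
    constructor
    · exact le_ciInf fun n => (t n).2.1
    · exact hq_le_x₀.trans x₀.2.2
  set qI : unitInterval := ⟨q, hq_mem⟩ with hqI
  have ht_tendsto : Filter.Tendsto t Filter.atTop (nhds qI) := by
    rw [tendsto_subtype_rng]
    exact htr_tendsto
  -- q is a fixed point of f
  have hfq : f qI = qI := by
    have h1 : Filter.Tendsto (fun n => f (t n)) Filter.atTop (nhds (f qI)) :=
      (f.continuous.tendsto qI).comp ht_tendsto
    have h2 : Filter.Tendsto (fun n => f (t (n + 1))) Filter.atTop (nhds (f qI)) :=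
      h1.comp (Filter.tendsto_add_atTop_nat 1)
    have h3 : (fun n => f (t (n + 1))) = t := by
      funext n
      have he : (1 : ℤ) + (-((n:ℕ) + 1 : ℤ)) = -(n : ℤ) := by ring
      have hc : (-(((n:ℕ) + 1 : ℕ) : ℤ)) = (-((n:ℕ) + 1 : ℤ)) := by push_cast; ring
      calc f (t (n + 1)) = (f ^ (1 : ℤ)) ((f ^ (-((n:ℕ) + 1 : ℤ))) x₀) := by
            rw [ht]; dsimp only; rw [zpow_one, hc]
        _ = (f ^ ((1 : ℤ) + -((n:ℕ) + 1 : ℤ))) x₀ := by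
            rw [← Homeomorph.mul_apply', ← zpow_add]
        _ = t n := by rw [he, ht]
    rw [h3] at h2
    exact tendsto_nhds_unique h2 ht_tendsto
  -- q is fixed by every power of f
  have hfq_symm : f.symm qI = qI := by
    conv_lhs => rw [← hfq]
    exact f.symm_apply_apply qI
  have hfq_pow : ∀ n : ℤ, (f ^ n) qI = qI := by
    intro n
    induction n using Int.induction_on with
    | zero => simp
    | succ k ih => rw [zpow_add_one, Homeomorph.mul_apply', hfq, ih]
    | pred k ih =>
        rw [zpow_sub_one, Homeomorph.mul_apply']
        have : (f⁻¹ : unitInterval ≃ₜ unitInterval) qI = qI := hfq_symm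
        rw [this, ih]
  -- use equicontinuity to derive a contradiction
  rw [Metric.uniformEquicontinuous_iff] at hreg
  obtain ⟨δ, hδ, hδ'⟩ := hreg ((p - q) / 2) (by linarith)
  set ε : ℝ := (p - q) / 2 with hε
  -- choose N with dist (t N) qI < δ
  have : ∀ᶠ n in Filter.atTop, dist (tr n) q < δ :=
    (htr_tendsto.sub_const q).norm.eventually_lt_const (by simpa using hδ) |>.mono
      (fun n hn => by simpa [Real.dist_eq] using hn)
  obtain ⟨N, hN⟩ := this.exists
  have hdist_tN : dist (t N) qI < δ := by
    rw [Subtype.dist_eq]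
    exact hN
  -- choose k with dist (s k) qI > ε
  have hsk : ∀ᶠ k in Filter.atTop, q + ε < sr k :=
    hsr_tendsto.eventually (eventually_gt_nhds (by rw [hε]; linarith))
  obtain ⟨k, hk⟩ := hsk.exists
  have hdist_sk : ε < dist (s k) qI := by
    rw [Subtype.dist_eq, Real.dist_eq]
    calc ε < sr k - q := by linarith
      _ ≤ |((s k : unitInterval) : ℝ) - q| := le_abs_self _
  -- but equicontinuity bounds this distance
  have key : (f ^ ((N : ℤ) + k)) (t N) = s k := by
    have he : ((N : ℤ) + k) + (-(N : ℤ)) = (k : ℤ) := by ring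
    calc (f ^ ((N : ℤ) + k)) (t N) = (f ^ ((N : ℤ) + k)) ((f ^ (-(N : ℤ))) x₀) := by rw [ht]
      _ = (f ^ (((N : ℤ) + k) + -(N : ℤ))) x₀ := by rw [← Homeomorph.mul_apply', ← zpow_add]
      _ = s k := by rw [he, hs]
  have := hδ' (t N) qI hdist_tN ((N : ℤ) + k)
  rw [key, hfq_pow] at this
  exact absurd this (not_lt.2 hdist_sk.le)

/-- A regular homeomorphism of `[0,1]` (the family of all its iterates
`f^n`, `n ∈ ℤ`, is uniformly equicontinuous) which is strictly increasing is the
identity map of `[0,1]`. -/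
theorem regular_increasing_homeo_unitInterval_eq_id (f : unitInterval ≃ₜ unitInterval)
    (hreg : UniformEquicontinuous fun n : ℤ => ((f ^ n : unitInterval ≃ₜ unitInterval) :
      unitInterval → unitInterval))
    (hmono : StrictMono (f : unitInterval → unitInterval)) :
    f = Homeomorph.refl unitInterval := by
  have hreg' : UniformEquicontinuous fun n : ℤ => ((f⁻¹ ^ n : unitInterval ≃ₜ unitInterval) :
      unitInterval → unitInterval) := by
    have h : (fun n : ℤ => ((f⁻¹ ^ n : unitInterval ≃ₜ unitInterval) :
        unitInterval → unitInterval)) =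
        (fun n : ℤ => ((f ^ n : unitInterval ≃ₜ unitInterval) :
        unitInterval → unitInterval)) ∘ (fun n : ℤ => -n) := by
      funext n
      simp [inv_zpow, ← zpow_neg]
    rw [h]
    exact hreg.comp _
  have hmono' : StrictMono ((f⁻¹ : unitInterval ≃ₜ unitInterval) :
      unitInterval → unitInterval) := fun a b h => by
    have : ((f⁻¹ : unitInterval ≃ₜ unitInterval) : unitInterval → unitInterval) = f.symm := rfl
    rw [this, ← hmono.lt_iff_lt]
    simpa using h
  have h1 := regular_increasing_homeo_unitInterval_le f hreg hmono
  have h2 := regular_increasing_homeo_unitInterval_le f⁻¹ hreg' hmono'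
  apply Homeomorph.ext
  intro x
  refine le_antisymm (h1 x) ?_
  have := hmono.monotone (h2 x)
  have hfs : f ((f⁻¹ : unitInterval ≃ₜ unitInterval) x) = x := f.apply_symm_apply x
  rwa [hfs] at this
end

section
/- Let f be a regular, orientation-preserving homeomorphism of the circle S¹ = ℝ/ℤ which has at least one fixed point. Then f is the identity map of the circle. -/
open Filter Topology

namespace RegCircleAux

lemma zpow_fixed (f : UnitAddCircle ≃ₜ UnitAddCircle) {p : UnitAddCircle} (hp : f p = p) :
    ∀ n : ℤ, (f ^ n) p = p := by
  have hn : ∀ n : ℕ, (f ^ n) p = p := by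
    intro n; induction n with
    | zero => simp
    | succ n ih => rw [pow_succ', Homeomorph.mul_apply', ih, hp]
  intro n
  obtain ⟨m, rfl | rfl⟩ := Int.eq_nat_or_neg n
  · rw [zpow_natCast]; exact hn m
  · have : (f ^ (-(m:ℤ))) ((f ^ (m:ℤ)) p) = p := by
      rw [← Homeomorph.mul_apply', ← zpow_add]; simp
    rwa [zpow_natCast, hn m] at this

lemma limit_eq (f : UnitAddCircle ≃ₜ UnitAddCircle)
    (hreg : UniformEquicontinuous fun n : ℤ => ((f ^ n : UnitAddCircle ≃ₜ UnitAddCircle) :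
      UnitAddCircle → UnitAddCircle))
    {p y : UnitAddCircle} (hp : f p = p)
    (hlim : Tendsto (fun n : ℕ => (f ^ n) y) atTop (𝓝 p)) : y = p := by
  by_contra hne
  have hε : 0 < dist y p := dist_pos.2 hne
  obtain ⟨δ, hδ, H⟩ := Metric.uniformEquicontinuous_iff.mp hreg (dist y p) hε
  obtain ⟨N, hN⟩ := Metric.tendsto_atTop.mp hlim δ hδ
  have h := H ((f ^ N) y) p (hN N le_rfl) (-(N:ℤ))
  have e1 : (f ^ (-(N:ℤ))) ((f ^ N) y) = y := by
    have : (f ^ (-(N:ℤ))) ((f ^ (N:ℤ)) y) = y := by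
      rw [← Homeomorph.mul_apply', ← zpow_add]; simp
    rwa [zpow_natCast] at this
  rw [e1, zpow_fixed f hp] at h
  exact lt_irrefl _ h

lemma coe_sub_int (a : ℝ) (k : ℤ) : ((a - k : ℝ) : UnitAddCircle) = (a : UnitAddCircle) := by
  rw [QuotientAddGroup.eq_iff_sub_mem]
  exact ⟨-k, by simp [zsmul_eq_mul]⟩

lemma iterate_coe (f : UnitAddCircle ≃ₜ UnitAddCircle) (G : ℝ → ℝ)
    (hf : ∀ x : ℝ, f (x : UnitAddCircle) = ((G x : ℝ) : UnitAddCircle)) (y : ℝ) :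
    ∀ n : ℕ, (f ^ n) (y : UnitAddCircle) = ((G^[n] y : ℝ) : UnitAddCircle) := by
  intro n; induction n with
  | zero => simp
  | succ n ih =>
    rw [pow_succ', Homeomorph.mul_apply', ih, hf, Function.iterate_succ_apply']

lemma not_int_between {k : ℤ} (h1 : (-1 : ℝ) < k) (h2 : (k : ℝ) < 0) : False := by
  have hk2 : k < 0 := by exact_mod_cast h2
  have hk1 : (-1 : ℤ) < k := by exact_mod_cast h1
  omega

/-- The key contradiction in the increasing case. -/
lemma case_up (f : UnitAddCircle ≃ₜ UnitAddCircle)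
    (hreg : UniformEquicontinuous fun n : ℤ => ((f ^ n : UnitAddCircle ≃ₜ UnitAddCircle) :
      UnitAddCircle → UnitAddCircle))
    (G : ℝ → ℝ) (hmono : StrictMono G) (hper : ∀ x : ℝ, G (x + 1) = G x + 1)
    (hf : ∀ x : ℝ, f (x : UnitAddCircle) = ((G x : ℝ) : UnitAddCircle))
    {x₀ : ℝ} (hx₀ : G x₀ = x₀) {y : ℝ} (hy1 : x₀ < y) (hy2 : y < x₀ + 1) (hgy : y < G y) :
    False := by
  set a : ℕ → ℝ := fun n => G^[n] y with ha
  have hsucc : ∀ n, a (n + 1) = G (a n) := fun n => Function.iterate_succ_apply' G n y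
  have hlt : ∀ n, a n < a (n + 1) := by
    intro n; induction n with
    | zero => simpa [ha, hsucc] using hgy
    | succ n ih => simpa only [← hsucc] using hmono ih
  have hmonoa : StrictMono a := strictMono_nat_of_lt_succ hlt
  have hbd : ∀ n, a n < x₀ + 1 := by
    intro n; induction n with
    | zero => simpa [ha] using hy2
    | succ n ih =>
      rw [hsucc n]
      calc G (a n) < G (x₀ + 1) := hmono ih
        _ = x₀ + 1 := by rw [hper, hx₀]
  have hbdd : BddAbove (Set.range a) := ⟨x₀ + 1, by rintro _ ⟨n, rfl⟩; exact (hbd n).le⟩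
  set p : ℝ := ⨆ n, a n with hp
  have htend : Tendsto a atTop (𝓝 p) := tendsto_atTop_ciSup hmonoa.monotone hbdd
  have hyp : y < p := lt_of_lt_of_le (by simpa [ha] using hlt 0) (le_ciSup hbdd 1)
  have hple : p ≤ x₀ + 1 := ciSup_le fun n => (hbd n).le
  -- circle convergence
  have hcont : Continuous (fun x : ℝ => (x : UnitAddCircle)) := AddCircle.continuous_mk' 1
  have htendc : Tendsto (fun n => ((a n : ℝ) : UnitAddCircle)) atTop (𝓝 (p : UnitAddCircle)) :=
    (hcont.tendsto p).comp htend
  have hiter := iterate_coe f G hf y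
  have htendf : Tendsto (fun n : ℕ => (f ^ n) (y : UnitAddCircle)) atTop
      (𝓝 (p : UnitAddCircle)) := by
    simpa only [hiter] using htendc
  -- f fixes p
  have hfp : f (p : UnitAddCircle) = (p : UnitAddCircle) := by
    have h1 : Tendsto (fun n : ℕ => f ((a n : ℝ) : UnitAddCircle)) atTop
        (𝓝 (f (p : UnitAddCircle))) := (f.continuous.tendsto _).comp htendc
    have h2 : Tendsto (fun n : ℕ => f ((a n : ℝ) : UnitAddCircle)) atTop
        (𝓝 (p : UnitAddCircle)) := by
      have : (fun n : ℕ => f ((a n : ℝ) : UnitAddCircle))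
          = fun n : ℕ => ((a (n + 1) : ℝ) : UnitAddCircle) := by
        funext n; rw [hf, hsucc]
      rw [this]
      exact htendc.comp (tendsto_add_atTop_nat 1)
    exact tendsto_nhds_unique h1 h2
  have := limit_eq f hreg hfp htendf
  rw [QuotientAddGroup.eq_iff_sub_mem] at this
  obtain ⟨k, hk⟩ := this
  have hk' : (k : ℝ) = y - p := by simpa [zsmul_eq_mul] using hk
  exact not_int_between (k := k) (by linarith) (by linarith)

/-- The key contradiction in the decreasing case. -/
lemma case_down (f : UnitAddCircle ≃ₜ UnitAddCircle)
    (hreg : UniformEquicontinuous fun n : ℤ => ((f ^ n : UnitAddCircle ≃ₜ UnitAddCircle) :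
      UnitAddCircle → UnitAddCircle))
    (G : ℝ → ℝ) (hmono : StrictMono G) (hper : ∀ x : ℝ, G (x + 1) = G x + 1)
    (hf : ∀ x : ℝ, f (x : UnitAddCircle) = ((G x : ℝ) : UnitAddCircle))
    {x₀ : ℝ} (hx₀ : G x₀ = x₀) {y : ℝ} (hy1 : x₀ < y) (hy2 : y < x₀ + 1) (hgy : G y < y) :
    False := by
  set a : ℕ → ℝ := fun n => G^[n] y with ha
  have hsucc : ∀ n, a (n + 1) = G (a n) := fun n => Function.iterate_succ_apply' G n y
  have hlt : ∀ n, a (n + 1) < a n := by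
    intro n; induction n with
    | zero => simpa [ha, hsucc] using hgy
    | succ n ih => simpa only [← hsucc] using hmono ih
  have hmonoa : StrictAnti a := strictAnti_nat_of_succ_lt hlt
  have hbd : ∀ n, x₀ < a n := by
    intro n; induction n with
    | zero => simpa [ha] using hy1
    | succ n ih =>
      rw [hsucc n]
      calc x₀ = G x₀ := hx₀.symm
        _ < G (a n) := hmono ih
  have hbdd : BddBelow (Set.range a) := ⟨x₀, by rintro _ ⟨n, rfl⟩; exact (hbd n).le⟩
  set p : ℝ := ⨅ n, a n with hp
  have htend : Tendsto a atTop (𝓝 p) := tendsto_atTop_ciInf hmonoa.antitone hbdd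
  have hyp : p < y := lt_of_le_of_lt (ciInf_le hbdd 1) (by simpa [ha, hsucc] using hgy)
  have hple : x₀ ≤ p := le_ciInf fun n => (hbd n).le
  have hcont : Continuous (fun x : ℝ => (x : UnitAddCircle)) := AddCircle.continuous_mk' 1
  have htendc : Tendsto (fun n => ((a n : ℝ) : UnitAddCircle)) atTop (𝓝 (p : UnitAddCircle)) :=
    (hcont.tendsto p).comp htend
  have hiter := iterate_coe f G hf y
  have htendf : Tendsto (fun n : ℕ => (f ^ n) (y : UnitAddCircle)) atTop
      (𝓝 (p : UnitAddCircle)) := by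
    simpa only [hiter] using htendc
  have hfp : f (p : UnitAddCircle) = (p : UnitAddCircle) := by
    have h1 : Tendsto (fun n : ℕ => f ((a n : ℝ) : UnitAddCircle)) atTop
        (𝓝 (f (p : UnitAddCircle))) := (f.continuous.tendsto _).comp htendc
    have h2 : Tendsto (fun n : ℕ => f ((a n : ℝ) : UnitAddCircle)) atTop
        (𝓝 (p : UnitAddCircle)) := by
      have : (fun n : ℕ => f ((a n : ℝ) : UnitAddCircle))
          = fun n : ℕ => ((a (n + 1) : ℝ) : UnitAddCircle) := by
        funext n; rw [hf, hsucc]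
      rw [this]
      exact htendc.comp (tendsto_add_atTop_nat 1)
    exact tendsto_nhds_unique h1 h2
  have := limit_eq f hreg hfp htendf
  rw [QuotientAddGroup.eq_iff_sub_mem] at this
  obtain ⟨k, hk⟩ := this
  have hk' : (k : ℝ) = y - p := by simpa [zsmul_eq_mul] using hk
  exact not_int_between (k := -k) (by push_cast; linarith) (by push_cast; linarith)

lemma G_add_int (G : ℝ → ℝ) (hper : ∀ x : ℝ, G (x + 1) = G x + 1) (x : ℝ) :
    ∀ m : ℤ, G (x + m) = G x + m := by
  have key : ∀ (z : ℝ), G (z - 1) = G z - 1 := by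
    intro z; have := hper (z - 1); simp at this; linarith
  intro m
  induction m using Int.induction_on with
  | zero => simp
  | succ n ih => push_cast; rw [← add_assoc]; rw [hper]; push_cast at ih; rw [ih]; ring
  | pred n ih =>
    push_cast
    have : x + (-(n:ℝ) - 1) = (x + -(n:ℝ)) - 1 := by ring
    rw [this, key]; push_cast at ih; rw [ih]; ring

end RegCircleAux

open RegCircleAux in
/-- A regular homeomorphism of the circle `ℝ/ℤ` (the family of all its
iterates `f^n`, `n ∈ ℤ`, is uniformly equicontinuous) which is orientation-preserving
(it admits a strictly increasing degree-one lift to `ℝ`) and has a fixed point is the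
identity map of the circle. -/
theorem regular_orientation_preserving_circle_homeo_with_fixed_point_eq_id
    (f : UnitAddCircle ≃ₜ UnitAddCircle)
    (hreg : UniformEquicontinuous fun n : ℤ => ((f ^ n : UnitAddCircle ≃ₜ UnitAddCircle) :
      UnitAddCircle → UnitAddCircle))
    (horient : ∃ F : ℝ → ℝ, StrictMono F ∧ (∀ x : ℝ, F (x + 1) = F x + 1) ∧
      ∀ x : ℝ, f (x : UnitAddCircle) = ((F x : ℝ) : UnitAddCircle))
    (hfix : ∃ x : UnitAddCircle, f x = x) :
    f = Homeomorph.refl UnitAddCircle := by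
  obtain ⟨F, hFmono, hFper, hFf⟩ := horient
  obtain ⟨x, hx⟩ := hfix
  obtain ⟨x₀, rfl⟩ := QuotientAddGroup.mk_surjective x
  -- F x₀ - x₀ is an integer k
  rw [hFf] at hx
  rw [QuotientAddGroup.eq_iff_sub_mem] at hx
  obtain ⟨k, hk0⟩ := hx
  have hk : (k : ℝ) = F x₀ - x₀ := by simpa [zsmul_eq_mul] using hk0
  -- adjusted lift G
  set G : ℝ → ℝ := fun x => F x - k with hGdef
  have hGmono : StrictMono G := fun a b h => by simp only [hGdef]; exact sub_lt_sub_right (hFmono h) _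
  have hGper : ∀ x : ℝ, G (x + 1) = G x + 1 := fun x => by simp only [hGdef, hFper]; ring
  have hGf : ∀ x : ℝ, f (x : UnitAddCircle) = ((G x : ℝ) : UnitAddCircle) := by
    intro x; rw [hFf, hGdef]; exact (coe_sub_int (F x) k).symm
  have hGx₀ : G x₀ = x₀ := by simp only [hGdef]; linarith
  -- prove f = id
  refine Homeomorph.ext fun z => ?_
  obtain ⟨y₀, rfl⟩ := QuotientAddGroup.mk_surjective z
  suffices h : (((G y₀ : ℝ) : UnitAddCircle)) = ((y₀ : ℝ) : UnitAddCircle) by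
    show f _ = _
    rw [hGf y₀]
    exact h
  by_contra hne
  -- normalize y₀ to [x₀, x₀ + 1)
  set m : ℤ := ⌊y₀ - x₀⌋ with hm
  set y : ℝ := y₀ - m with hy
  have hfr : y - x₀ = Int.fract (y₀ - x₀) := by
    rw [hy, hm, Int.fract]; ring
  have hy1 : x₀ ≤ y := by
    have := Int.fract_nonneg (y₀ - x₀); linarith
  have hy2 : y < x₀ + 1 := by
    have := Int.fract_lt_one (y₀ - x₀); linarith
  have hGy : G y = G y₀ - m := by
    have := G_add_int G hGper y₀ (-m)
    push_cast at this
    rw [hy, sub_eq_add_neg]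
    linarith
  have hney : (((G y : ℝ) : UnitAddCircle)) ≠ ((y : ℝ) : UnitAddCircle) := by
    rw [hGy, hy, coe_sub_int (G y₀) m, coe_sub_int y₀ m]
    exact hne
  have hy1' : x₀ < y := by
    rcases eq_or_lt_of_le hy1 with h | h
    · exfalso
      apply hney
      rw [← h, hGx₀]
    · exact h
  rcases lt_trichotomy (G y) y with h | h | h
  · exact case_down f hreg G hGmono hGper hGf hGx₀ hy1' hy2 h
  · exact hney (by rw [h])
  · exact case_up f hreg G hGmono hGper hGf hGx₀ hy1' hy2 h
end

section
/- Let G be a compact subgroup of the group of orientation-preserving homeomorphisms of the circle S¹ = ℝ/ℤ, equipped with the uniform metric. Then the rotation-number map ρ : G → ℝ/ℤ, which assigns to f ∈ G the translation number of any lift of f to ℝ, taken modulo ℤ, is a continuous and injective group homomorphism into the additive circle group ℝ/ℤ. -/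
open Filter Topology Set Function

namespace RotAux

/-- `F : ℝ → ℝ` is a strictly monotone degree-one lift of the circle homeomorphism `f`. -/
def IsLift (f : UnitAddCircle ≃ₜ UnitAddCircle) (F : ℝ → ℝ) : Prop :=
  StrictMono F ∧ (∀ x : ℝ, F (x + 1) = F x + 1) ∧
    ∀ x : ℝ, f (x : UnitAddCircle) = ((F x : ℝ) : UnitAddCircle)

theorem coe_int_eq_zero (m : ℤ) : (((m : ℝ)) : UnitAddCircle) = 0 :=
  (AddCircle.coe_eq_zero_iff (1:ℝ)).2 ⟨m, by simp⟩

theorem coe_add_int (x : ℝ) (m : ℤ) : ((x + m : ℝ) : UnitAddCircle) = (x : UnitAddCircle) := by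
  rw [AddCircle.coe_add, coe_int_eq_zero, add_zero]

theorem exists_int_of_coe_eq {x y : ℝ} (h : (x : UnitAddCircle) = (y : UnitAddCircle)) :
    ∃ m : ℤ, y = x + m := by
  have h0 : ((x - y : ℝ) : UnitAddCircle) = 0 := by
    rw [AddCircle.coe_sub, h, sub_self]
  obtain ⟨n, hn⟩ := (AddCircle.coe_eq_zero_iff (1:ℝ)).1 h0
  have hn' : (n : ℝ) = x - y := by
    rw [← hn]; simp
  exact ⟨-n, by push_cast; linarith⟩

variable {f g : UnitAddCircle ≃ₜ UnitAddCircle} {F G : ℝ → ℝ}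

/-- Bundle an `IsLift` as a `CircleDeg1Lift`. -/
def toLift (h : IsLift f F) : CircleDeg1Lift := ⟨⟨F, h.1.monotone⟩, h.2.1⟩

@[simp] theorem toLift_coe (h : IsLift f F) : ⇑(toLift h) = F := rfl

theorem IsLift.map_add_int (h : IsLift f F) (x : ℝ) (m : ℤ) : F (x + m) = F x + m :=
  (toLift h).map_add_int x m

theorem IsLift.surjective (h : IsLift f F) : Function.Surjective F := by
  intro y
  obtain ⟨z, hz⟩ := f.surjective ((y : ℝ) : UnitAddCircle)
  obtain ⟨x, rfl⟩ := QuotientAddGroup.mk_surjective z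
  rw [show ((x : ℝ) : UnitAddCircle) = ((x : ℝ) : UnitAddCircle) from rfl] at hz
  rw [h.2.2 x] at hz
  obtain ⟨m, hm⟩ := exists_int_of_coe_eq hz
  exact ⟨x + m, by rw [h.map_add_int, hm]⟩

theorem IsLift.continuous (h : IsLift f F) : Continuous F := by
  have := (StrictMono.orderIsoOfSurjective F h.1 h.surjective).continuous
  rwa [StrictMono.coe_orderIsoOfSurjective] at this

theorem IsLift.one (m : ℤ) : IsLift 1 (fun x => x + m) := by
  refine ⟨fun a b hab => by simpa using hab, fun x => by ring, fun x => ?_⟩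
  rw [Homeomorph.one_apply, coe_add_int]

theorem IsLift.mul (hf : IsLift f F) (hg : IsLift g G) : IsLift (f * g) (F ∘ G) := by
  refine ⟨hf.1.comp hg.1, fun x => by simp [Function.comp, hg.2.1, hf.2.1], fun x => ?_⟩
  rw [Homeomorph.mul_apply', hg.2.2 x, hf.2.2 (G x)]
  rfl

theorem IsLift.pow (hf : IsLift f F) (n : ℕ) : IsLift (f ^ n) F^[n] := by
  induction n with
  | zero => exact ⟨strictMono_id, fun x => rfl, fun x => by simp⟩
  | succ n ih =>
      have := ih.mul hf
      rw [← pow_succ] at this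
      simpa [Function.iterate_succ] using this

theorem IsLift.add_int (hf : IsLift f F) (m : ℤ) : IsLift f (fun x => F x + m) := by
  refine ⟨fun a b hab => by simpa using hf.1 hab, fun x => ?_, fun x => ?_⟩
  · show F (x + 1) + (m:ℝ) = F x + m + 1
    rw [hf.2.1]; ring
  · show f _ = ((F x + (m:ℝ) : ℝ) : UnitAddCircle)
    rw [hf.2.2 x, coe_add_int]

theorem IsLift.exists_inv (hf : IsLift f F) :
    ∃ Fi : ℝ → ℝ, IsLift f⁻¹ Fi ∧ (∀ x, Fi (F x) = x) ∧ ∀ x, F (Fi x) = x := by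
  set e := StrictMono.orderIsoOfSurjective F hf.1 hf.surjective with he
  have hcoe : ∀ x, e x = F x := fun x => by
    rw [he, StrictMono.coe_orderIsoOfSurjective]
  have hsect : ∀ x, e.symm (F x) = x := fun x => by
    rw [← hcoe]; exact e.symm_apply_apply x
  have hsect2 : ∀ x, F (e.symm x) = x := fun x => by
    rw [← hcoe]; exact e.apply_symm_apply x
  refine ⟨fun x => e.symm x, ⟨e.symm.strictMono, fun x => ?_, fun x => ?_⟩, hsect, hsect2⟩
  · apply e.injective
    rw [hcoe, hsect2, hcoe, hf.2.1, hsect2]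
  · apply f.injective
    have h1 : f (((e.symm x : ℝ)) : UnitAddCircle) = ((F (e.symm x) : ℝ) : UnitAddCircle) :=
      hf.2.2 _
    rw [hsect2] at h1
    rw [← h1]
    show f (f⁻¹ _) = _
    rw [← Homeomorph.mul_apply', mul_inv_cancel, Homeomorph.one_apply']

theorem IsLift.eq_add_int (hF : IsLift f F) (hG : IsLift f G) : ∃ m : ℤ, ∀ x, F x = G x + m := by
  have hint : ∀ x, ∃ m : ℤ, F x = G x + m := by
    intro x
    have : ((G x : ℝ) : UnitAddCircle) = ((F x : ℝ) : UnitAddCircle) := by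
      rw [← hF.2.2 x, ← hG.2.2 x]
    exact exists_int_of_coe_eq this
  have hd : Continuous fun x => F x - G x := (hF.continuous).sub hG.continuous
  obtain ⟨m0, hm0⟩ := hint 0
  refine ⟨m0, fun x => ?_⟩
  by_contra hne
  obtain ⟨mx, hmx⟩ := hint x
  have hmm : mx ≠ m0 := by
    rintro rfl; exact hne hmx
  -- the continuous function F - G takes the two distinct integer values m0, mx;
  -- by IVT it takes a non-integer value, contradiction
  set d := fun x => F x - G x with hdd
  have hdx : d x = mx := by simp [hdd, hmx]
  have hd0 : d 0 = m0 := by simp [hdd, hm0]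
  set p := min mx m0 with hp
  set q := max mx m0 with hq
  have hpq : p + 1 ≤ q := by
    rcases hmm.lt_or_gt with h | h
    · simp [hp, hq, min_def, max_def, h.le, h.not_ge]; omega
    · simp [hp, hq, min_def, max_def, h.le]; omega
  set v : ℝ := (p : ℝ) + 1/2 with hv
  have hcmin : ((p : ℤ) : ℝ) = min (mx:ℝ) (m0:ℝ) := Int.cast_mono.map_min
  have hcmax : ((q : ℤ) : ℝ) = max (mx:ℝ) (m0:ℝ) := Int.cast_mono.map_max
  have hpq' : ((p:ℤ):ℝ) + 1 ≤ ((q:ℤ):ℝ) := by exact_mod_cast hpq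
  have hvmem : v ∈ Set.Icc (min (d x) (d 0)) (max (d x) (d 0)) := by
    rw [hdx, hd0, ← hcmin, ← hcmax]
    constructor
    · rw [hv]; linarith
    · rw [hv]; linarith
  have hrange : v ∈ Set.range d := by
    rcases le_total (d x) (d 0) with h | h
    · exact intermediate_value_univ x 0 hd (by rwa [min_eq_left h, max_eq_right h] at hvmem)
    · exact intermediate_value_univ 0 x hd (by rwa [min_eq_right h, max_eq_left h] at hvmem)
  obtain ⟨y, hy⟩ := hrange
  obtain ⟨my, hmy⟩ := hint y
  have hdy : d y = my := by simp [hdd, hmy]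
  have : ((2 * my : ℤ) : ℝ) = 2 * p + 1 := by
    push_cast
    rw [hdy] at hy
    rw [hv] at hy
    linarith [hy]
  have : (2 * my : ℤ) = 2 * p + 1 := by exact_mod_cast this
  omega

theorem collapse (G : Subgroup (UnitAddCircle ≃ₜ UnitAddCircle))
    (hG : IsCompact (G : Set (UnitAddCircle ≃ₜ UnitAddCircle)))
    {g : UnitAddCircle ≃ₜ UnitAddCircle} (hg : g ∈ G) {F : ℝ → ℝ} (hF : IsLift g F)
    {a y : ℝ} (ha : F a = a) (hy1 : a < y) (hy2 : y < a + 1) (hyF : y < F y) : False := by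
  set u : ℕ → ℝ := fun n => F^[n] y with hu
  have hstep : ∀ n, u (n + 1) = F (u n) := fun n => Function.iterate_succ_apply' F n y
  have hlt : ∀ n, u n < u (n + 1) := by
    intro n
    induction n with
    | zero => simpa [hu] using hyF
    | succ n ih => rw [hstep, hstep]; exact hF.1 ih
  have hub : ∀ n, u n < a + 1 := by
    intro n
    induction n with
    | zero => simpa [hu] using hy2
    | succ n ih =>
        rw [hstep]
        calc F (u n) < F (a + 1) := hF.1 ih
        _ = a + 1 := by rw [hF.2.1, ha]
  have hmono : Monotone u := monotone_nat_of_le_succ fun n => (hlt n).le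
  have hbdd : BddAbove (Set.range u) := ⟨a + 1, by rintro _ ⟨n, rfl⟩; exact (hub n).le⟩
  set l := ⨆ n, u n with hl
  have htend : Tendsto u atTop (𝓝 l) := tendsto_atTop_ciSup hmono hbdd
  have htend1 : Tendsto (fun n => u (n + 1)) atTop (𝓝 l) :=
    htend.comp (tendsto_add_atTop_nat 1)
  have hle : ∀ z ∈ Set.Icc y (F y), Tendsto (fun n => F^[n] z) atTop (𝓝 l) := by
    intro z hz
    refine tendsto_of_tendsto_of_tendsto_of_le_of_le htend htend1 (fun n => ?_) (fun n => ?_)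
    · exact hF.1.monotone.iterate n hz.1
    · calc F^[n] z ≤ F^[n] (F y) := hF.1.monotone.iterate n hz.2
      _ = u (n+1) := (Function.iterate_succ_apply F n y).symm
  have hGmem : ∀ n : ℕ, g ^ n ∈ (G : Set (UnitAddCircle ≃ₜ UnitAddCircle)) :=
    fun n => pow_mem hg n
  obtain ⟨h, hhG, φ, hφ, hφt⟩ := hG.tendsto_subseq hGmem
  have key : ∀ z : UnitAddCircle, Tendsto (fun k => (g ^ φ k) z) atTop (𝓝 (h z)) := by
    intro z
    rw [tendsto_iff_dist_tendsto_zero]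
    have hb : ∀ k, dist ((g ^ φ k) z) (h z) ≤ dist (g ^ φ k) h := fun k =>
      ContinuousMap.dist_apply_le_dist
        (f := ((g ^ φ k : UnitAddCircle ≃ₜ UnitAddCircle) : C(UnitAddCircle, UnitAddCircle)))
        (g := (h : C(UnitAddCircle, UnitAddCircle))) z
    have hd : Tendsto (fun k => dist (g ^ φ k) h) atTop (𝓝 0) :=
      tendsto_iff_dist_tendsto_zero.1 hφt
    exact squeeze_zero (fun k => dist_nonneg) hb hd
  have hcol : ∀ z ∈ Set.Icc y (F y), h ((z : ℝ) : UnitAddCircle) = ((l : ℝ) : UnitAddCircle) := by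
    intro z hz
    have h2 : ∀ k, (g ^ φ k) ((z:ℝ) : UnitAddCircle) = ((F^[φ k] z : ℝ) : UnitAddCircle) :=
      fun k => (hF.pow (φ k)).2.2 z
    have h3 : Tendsto (fun k => F^[φ k] z) atTop (𝓝 l) :=
      (hle z hz).comp hφ.tendsto_atTop
    have h4 := ((AddCircle.continuous_mk' (1:ℝ)).tendsto l).comp h3
    exact tendsto_nhds_unique (key _) (h4.congr fun k => (h2 k).symm)
  have hFya : F y < a + 1 := by
    have h5 : F y < F (a+1) := hF.1 hy2
    rwa [hF.2.1, ha] at h5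
  have hne : ((y:ℝ) : UnitAddCircle) ≠ ((F y : ℝ) : UnitAddCircle) := by
    intro hEq
    obtain ⟨m, hm⟩ := exists_int_of_coe_eq hEq
    have h1 : (0:ℝ) < m := by linarith
    have h2 : (m:ℝ) < 1 := by linarith
    have h3 : 0 < m ∧ m < 1 := ⟨by exact_mod_cast h1, by exact_mod_cast h2⟩
    omega
  exact hne (h.injective ((hcol y ⟨le_refl y, hyF.le⟩).trans
    (hcol (F y) ⟨hyF.le, le_refl _⟩).symm))

theorem free (G : Subgroup (UnitAddCircle ≃ₜ UnitAddCircle))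
    (hG : IsCompact (G : Set (UnitAddCircle ≃ₜ UnitAddCircle)))
    (hop : ∀ f ∈ G, ∃ F : ℝ → ℝ, StrictMono F ∧ (∀ x : ℝ, F (x + 1) = F x + 1) ∧
      ∀ x : ℝ, f (x : UnitAddCircle) = ((F x : ℝ) : UnitAddCircle)) :
    ∀ u ∈ G, (∃ x : UnitAddCircle, u x = x) → u = 1 := by
  intro u huG hfix
  obtain ⟨x, hx⟩ := hfix
  by_contra hne
  obtain ⟨F0, h1, h2, h3⟩ := hop u huG
  have hIs0 : IsLift u F0 := ⟨h1, h2, h3⟩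
  obtain ⟨a, rfl⟩ := QuotientAddGroup.mk_surjective x
  have hxa : ((F0 a : ℝ) : UnitAddCircle) = ((a:ℝ) : UnitAddCircle) := by
    rw [← hIs0.2.2 a]; exact hx
  obtain ⟨m, hm⟩ := exists_int_of_coe_eq hxa
  obtain ⟨F, hIs, haF⟩ : ∃ F : ℝ → ℝ, IsLift u F ∧ F a = a :=
    ⟨fun z => F0 z + (m:ℝ), hIs0.add_int m, by simp only; linarith⟩
  have hne' : ∃ z : UnitAddCircle, u z ≠ z := by
    by_contra hco
    push_neg at hco
    exact hne (Homeomorph.ext fun z => (hco z).trans (Homeomorph.one_apply' z).symm)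
  obtain ⟨z, hz⟩ := hne'
  obtain ⟨z0, rfl⟩ := QuotientAddGroup.mk_surjective z
  set y := toIcoMod (zero_lt_one) a z0 with hy
  have hyI : y ∈ Set.Ico a (a + 1) := toIcoMod_mem_Ico zero_lt_one a z0
  have hycoe : ((y:ℝ) : UnitAddCircle) = ((z0:ℝ) : UnitAddCircle) := by
    have hcz : ((toIcoDiv zero_lt_one a z0 • (1:ℝ) : ℝ) : UnitAddCircle) = 0 :=
      (AddCircle.coe_eq_zero_iff (1:ℝ)).2 ⟨_, rfl⟩
    show ((z0 - toIcoDiv zero_lt_one a z0 • (1:ℝ) : ℝ) : UnitAddCircle) = _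
    rw [AddCircle.coe_sub, hcz, sub_zero]
  have hzy : u ((y:ℝ):UnitAddCircle) ≠ ((y:ℝ):UnitAddCircle) := by
    rw [hycoe]; exact hz
  have hya : a ≠ y := by
    intro hEq
    apply hzy
    rw [← hEq, hIs.2.2 a, haF]
  have hay : a < y := lt_of_le_of_ne hyI.1 hya
  have hFy : F y ≠ y := by
    intro hfy
    apply hzy
    rw [hIs.2.2 y, hfy]
  rcases hFy.lt_or_gt with hltc | hgtc
  · obtain ⟨Fi, hFi, hsect, hsect2⟩ := hIs.exists_inv
    have haFi : Fi a = a := by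
      have := hsect a; rwa [haF] at this
    have hyFi : y < Fi y := by
      have := hFi.1 hltc
      rwa [hsect y] at this
    exact collapse G hG (inv_mem huG) hFi haFi hay hyI.2 hyFi
  · exact collapse G hG huG hIs haF hay hyI.2 hgtc


theorem le_total_lift (G : Subgroup (UnitAddCircle ≃ₜ UnitAddCircle))
    (hG : IsCompact (G : Set (UnitAddCircle ≃ₜ UnitAddCircle)))
    (hop : ∀ f ∈ G, ∃ F : ℝ → ℝ, StrictMono F ∧ (∀ x : ℝ, F (x + 1) = F x + 1) ∧
      ∀ x : ℝ, f (x : UnitAddCircle) = ((F x : ℝ) : UnitAddCircle))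
    {f g : UnitAddCircle ≃ₜ UnitAddCircle} {F Gf : ℝ → ℝ}
    (hf : f ∈ G) (hg : g ∈ G) (hF : IsLift f F) (hGf : IsLift g Gf)
    (hex : ∃ x, F x ≤ Gf x) : ∀ x, F x ≤ Gf x := by
  by_contra hcon
  push_neg at hcon
  obtain ⟨x1, hx1⟩ := hcon
  obtain ⟨x0, hx0⟩ := hex
  have hd : Continuous fun x => F x - Gf x := hF.continuous.sub hGf.continuous
  obtain ⟨zz, hzz⟩ : ∃ zz, F zz - Gf zz = 0 := by
    have h0 : (0:ℝ) ∈ Set.Icc (F x0 - Gf x0) (F x1 - Gf x1) := ⟨by linarith, by linarith⟩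
    exact intermediate_value_univ x0 x1 hd h0
  have hFG : F zz = Gf zz := by linarith
  have hfix : (g⁻¹ * f) ((zz:ℝ) : UnitAddCircle) = ((zz:ℝ) : UnitAddCircle) := by
    rw [Homeomorph.mul_apply', hF.2.2 zz, hFG, ← hGf.2.2 zz]
    rw [← Homeomorph.mul_apply', inv_mul_cancel, Homeomorph.one_apply']
  have huni : g⁻¹ * f = 1 := free G hG hop _ (mul_mem (inv_mem hg) hf) ⟨_, hfix⟩
  have hfg : g = f := inv_mul_eq_one.mp huni
  subst hfg
  obtain ⟨m, hm⟩ := hF.eq_add_int hGf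
  have hm0 : (m:ℝ) = 0 := by
    have := hm zz; rw [hFG] at this; linarith
  have := hm x1
  rw [hm0] at this
  linarith

theorem exists_bounds (G : Subgroup (UnitAddCircle ≃ₜ UnitAddCircle))
    (hG : IsCompact (G : Set (UnitAddCircle ≃ₜ UnitAddCircle)))
    (hop : ∀ f ∈ G, ∃ F : ℝ → ℝ, StrictMono F ∧ (∀ x : ℝ, F (x + 1) = F x + 1) ∧
      ∀ x : ℝ, f (x : UnitAddCircle) = ((F x : ℝ) : UnitAddCircle))
    {f : UnitAddCircle ≃ₜ UnitAddCircle} {F : ℝ → ℝ} (hf : f ∈ G) (hF : IsLift f F) :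
    ∃ m : ℤ, (∀ x, x + m ≤ F x) ∧ (∀ x, F x < x + m + 1) := by
  have hD : Continuous fun x => F x - x := hF.continuous.sub continuous_id
  obtain ⟨x0, hx0I, hx0min'⟩ :=
    isCompact_Icc.exists_isMinOn (Set.nonempty_Icc.2 zero_le_one) hD.continuousOn
  have hx0min := isMinOn_iff.mp hx0min'
  refine ⟨⌊F x0 - x0⌋, fun x => ?_, ?_⟩
  · have hper : ∀ (z : ℝ) (k : ℤ), F (z + k) - (z + k) = F z - z := by
      intro z k; rw [hF.map_add_int]; ring
    have hx : F x - x = F (Int.fract x) - Int.fract x := by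
      conv_lhs => rw [← Int.fract_add_floor x]
      exact hper _ _
    have hmem : Int.fract x ∈ Set.Icc (0:ℝ) 1 :=
      ⟨Int.fract_nonneg x, (Int.fract_lt_one x).le⟩
    have h1 := hx0min _ hmem
    have hfl : (⌊F x0 - x0⌋ : ℝ) ≤ F x0 - x0 := Int.floor_le _
    have h2 : (⌊F x0 - x0⌋ : ℝ) ≤ F x - x := by rw [hx]; linarith
    linarith
  · by_contra hcon
    push_neg at hcon
    obtain ⟨x1, hx1⟩ := hcon
    have hT : IsLift 1 (fun x => x + ((⌊F x0 - x0⌋ + 1 : ℤ):ℝ)) := IsLift.one _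
    have hall := le_total_lift G hG hop (one_mem G) hf hT hF ⟨x1, by push_cast; linarith⟩
    have h3 := hall x0
    push_cast at h3
    linarith [Int.lt_floor_add_one (F x0 - x0)]

theorem iter_le_iter {W V : ℝ → ℝ} (hW : Monotone W) (h : ∀ x, W x ≤ V x) :
    ∀ (n : ℕ) (x : ℝ), W^[n] x ≤ V^[n] x := by
  intro n
  induction n with
  | zero => intro x; exact le_refl x
  | succ n ih =>
      intro x
      rw [Function.iterate_succ_apply', Function.iterate_succ_apply']
      calc W (W^[n] x) ≤ W (V^[n] x) := hW (ih x)
        _ ≤ V (V^[n] x) := h _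

theorem comp_le_iter {F Gf : ℝ → ℝ} (hF : Monotone F) (hGf : Monotone Gf)
    (A : ∀ x, F (Gf x) ≤ Gf (F x)) :
    ∀ (n : ℕ) (x : ℝ), F^[n] (Gf^[n] x) ≤ (F ∘ Gf)^[n] x := by
  have hW : Monotone (F ∘ Gf) := hF.comp hGf
  have psi : ∀ (n : ℕ) (x : ℝ), F ((F ∘ Gf)^[n] x) ≤ (F ∘ Gf)^[n] (F x) := by
    intro n
    induction n with
    | zero => intro x; exact le_refl _
    | succ n ih =>
        intro x
        rw [Function.iterate_succ_apply', Function.iterate_succ_apply']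
        calc F ((F ∘ Gf) ((F ∘ Gf)^[n] x)) = F (F (Gf ((F ∘ Gf)^[n] x))) := rfl
          _ ≤ F (Gf (F ((F ∘ Gf)^[n] x))) := hF (A _)
          _ = (F ∘ Gf) (F ((F ∘ Gf)^[n] x)) := rfl
          _ ≤ (F ∘ Gf) ((F ∘ Gf)^[n] (F x)) := hW (ih x)
  intro n
  induction n with
  | zero => intro x; exact le_refl _
  | succ n ih =>
      intro x
      calc F^[n+1] (Gf^[n+1] x) = F (F^[n] (Gf^[n] (Gf x))) := by
            rw [Function.iterate_succ_apply' F, Function.iterate_succ_apply Gf]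
        _ ≤ F ((F ∘ Gf)^[n] (Gf x)) := hF (ih _)
        _ ≤ (F ∘ Gf)^[n] (F (Gf x)) := psi n _
        _ = (F ∘ Gf)^[n+1] x := by
            rw [Function.iterate_succ_apply (F ∘ Gf)]
            rfl

theorem iter_le_comp {F Gf : ℝ → ℝ} (hF : Monotone F) (hGf : Monotone Gf)
    (A : ∀ x, F (Gf x) ≤ Gf (F x)) :
    ∀ (n : ℕ) (x : ℝ), (Gf ∘ F)^[n] x ≤ Gf^[n] (F^[n] x) := by
  have hV : Monotone (Gf ∘ F) := hGf.comp hF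
  have psi : ∀ (n : ℕ) (x : ℝ), (Gf ∘ F)^[n] (Gf x) ≤ Gf ((Gf ∘ F)^[n] x) := by
    intro n
    induction n with
    | zero => intro x; exact le_refl _
    | succ n ih =>
        intro x
        rw [Function.iterate_succ_apply', Function.iterate_succ_apply']
        calc (Gf ∘ F) ((Gf ∘ F)^[n] (Gf x)) ≤ (Gf ∘ F) (Gf ((Gf ∘ F)^[n] x)) := hV (ih x)
          _ = Gf (F (Gf ((Gf ∘ F)^[n] x))) := rfl
          _ ≤ Gf (Gf (F ((Gf ∘ F)^[n] x))) := hGf (A _)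
          _ = Gf ((Gf ∘ F) ((Gf ∘ F)^[n] x)) := rfl
  intro n
  induction n with
  | zero => intro x; exact le_refl _
  | succ n ih =>
      intro x
      calc (Gf ∘ F)^[n+1] x = (Gf ∘ F)^[n] (Gf (F x)) := by
            rw [Function.iterate_succ_apply (Gf ∘ F)]
            rfl
        _ ≤ Gf ((Gf ∘ F)^[n] (F x)) := psi n (F x)
        _ ≤ Gf (Gf^[n] (F^[n] (F x))) := hGf (ih (F x))
        _ = Gf^[n+1] (F^[n+1] x) := by
            rw [← Function.iterate_succ_apply' Gf, ← Function.iterate_succ_apply F]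


theorem pow_apply_zero (h : IsLift f F) (n : ℕ) : ((toLift h) ^ n) 0 = F^[n] 0 := by
  show (⇑((toLift h) ^ n)) 0 = F^[n] 0
  rw [CircleDeg1Lift.coe_pow]
  rfl

theorem tendsto_tau (h : IsLift f F) :
    Tendsto (fun n : ℕ => (F^[n] 0) / n) atTop (𝓝 (toLift h).translationNumber) :=
  Filter.Tendsto.congr (fun n => by rw [pow_apply_zero h n])
    (toLift h).tendsto_translation_number₀

theorem tau_coe_eq (hF : IsLift f F) (hGf : IsLift f G) :
    (((toLift hF).translationNumber : ℝ) : UnitAddCircle)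
      = (((toLift hGf).translationNumber : ℝ) : UnitAddCircle) := by
  obtain ⟨m, hm⟩ := hF.eq_add_int hGf
  have hiter : ∀ (n : ℕ) (x : ℝ), F^[n] x = G^[n] x + ((n : ℤ) * m : ℤ) := by
    intro n
    induction n with
    | zero => intro x; simp
    | succ n ih =>
        intro x
        rw [Function.iterate_succ_apply' F, Function.iterate_succ_apply' G, ih x,
          hF.map_add_int, hm (G^[n] x)]
        push_cast
        ring
  have t1 := tendsto_tau hF
  have t2 := tendsto_tau hGf
  have hmm : Tendsto (fun n : ℕ => (((n : ℤ) * m : ℤ) : ℝ) / (n:ℝ)) atTop (𝓝 (m:ℝ)) := by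
    have heq : (fun n : ℕ => (((n : ℤ) * m : ℤ) : ℝ) / (n:ℝ)) =ᶠ[atTop] fun _ => (m:ℝ) := by
      filter_upwards [eventually_gt_atTop 0] with n hn
      have hne : (n:ℝ) ≠ 0 := (Nat.cast_pos.2 hn).ne'
      push_cast
      field_simp
    exact Tendsto.congr' heq.symm tendsto_const_nhds
  have t2' : Tendsto (fun n : ℕ => (F^[n] 0) / n) atTop
      (𝓝 ((toLift hGf).translationNumber + m)) := by
    have h1 := t2.add hmm
    refine h1.congr fun n => ?_
    rw [hiter n 0, add_div]
  have heq : (toLift hF).translationNumber = (toLift hGf).translationNumber + m :=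
    tendsto_nhds_unique t1 t2'
  rw [heq, coe_add_int]

theorem tau_add (G' : Subgroup (UnitAddCircle ≃ₜ UnitAddCircle))
    (hG : IsCompact (G' : Set (UnitAddCircle ≃ₜ UnitAddCircle)))
    (hop : ∀ f ∈ G', ∃ F : ℝ → ℝ, StrictMono F ∧ (∀ x : ℝ, F (x + 1) = F x + 1) ∧
      ∀ x : ℝ, f (x : UnitAddCircle) = ((F x : ℝ) : UnitAddCircle))
    {f g : UnitAddCircle ≃ₜ UnitAddCircle} {F Gf : ℝ → ℝ}
    (hf : f ∈ G') (hg : g ∈ G') (hF : IsLift f F) (hGf : IsLift g Gf) :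
    (toLift (hF.mul hGf)).translationNumber
      = (toLift hF).translationNumber + (toLift hGf).translationNumber := by
  have hbF : ∀ n : ℕ, ∃ m : ℤ, (∀ x, x + m ≤ F^[n] x) ∧ ∀ x, F^[n] x < x + m + 1 :=
    fun n => exists_bounds G' hG hop (pow_mem hf n) (hF.pow n)
  have hbG : ∀ n : ℕ, ∃ m : ℤ, (∀ x, x + m ≤ Gf^[n] x) ∧ ∀ x, Gf^[n] x < x + m + 1 :=
    fun n => exists_bounds G' hG hop (pow_mem hg n) (hGf.pow n)
  choose a ha1 ha2 using hbF
  choose b hb1 hb2 using hbG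
  have key : ∀ n : ℕ, ((a n : ℝ) + b n ≤ (F ∘ Gf)^[n] 0)
      ∧ ((F ∘ Gf)^[n] 0 < (a n : ℝ) + b n + 2) := by
    intro n
    rcases Classical.em (∃ x, F (Gf x) ≤ Gf (F x)) with hc | hc
    · have hA : ∀ x, F (Gf x) ≤ Gf (F x) :=
        le_total_lift G' hG hop (mul_mem hf hg) (mul_mem hg hf) (hF.mul hGf) (hGf.mul hF) hc
      constructor
      · have h1 := hb1 n 0
        have h2 := ha1 n (Gf^[n] 0)
        have h3 := comp_le_iter hF.1.monotone hGf.1.monotone hA n 0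
        linarith
      · have h1 := iter_le_iter (W := F ∘ Gf) (V := Gf ∘ F) (hF.1.comp hGf.1).monotone hA n 0
        have h2 := iter_le_comp hF.1.monotone hGf.1.monotone hA n 0
        have h3 := hb2 n (F^[n] 0)
        have h4 := ha2 n 0
        linarith
    · push_neg at hc
      have hA : ∀ x, Gf (F x) ≤ F (Gf x) := fun x => (hc x).le
      constructor
      · have h1 := ha1 n 0
        have h2 := hb1 n (F^[n] 0)
        have h3 := comp_le_iter hGf.1.monotone hF.1.monotone hA n 0
        have h4 := iter_le_iter (W := Gf ∘ F) (V := F ∘ Gf) (hGf.1.comp hF.1).monotone hA n 0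
        linarith
      · have h1 := iter_le_comp hGf.1.monotone hF.1.monotone hA n 0
        have h2 := ha2 n (Gf^[n] 0)
        have h3 := hb2 n 0
        linarith
  have tW := tendsto_tau (hF.mul hGf)
  have tF := tendsto_tau hF
  have tG := tendsto_tau hGf
  have hdiff := (tW.sub tF).sub tG
  have hzero : Tendsto (fun n : ℕ => ((F ∘ Gf)^[n] 0) / n - (F^[n] 0) / n - (Gf^[n] 0) / n)
      atTop (𝓝 0) := by
    apply squeeze_zero_norm ?_ (tendsto_const_div_atTop_nhds_zero_nat 2)
    intro n
    have h1 := (key n).1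
    have h2 := (key n).2
    have h3 := ha1 n 0
    have h4 := ha2 n 0
    have h5 := hb1 n 0
    have h6 := hb2 n 0
    have hrw : ((F ∘ Gf)^[n] 0) / n - (F^[n] 0) / n - (Gf^[n] 0) / n
        = ((F ∘ Gf)^[n] 0 - F^[n] 0 - Gf^[n] 0) / n := by ring
    rw [Real.norm_eq_abs, hrw, abs_div, Nat.abs_cast]
    rcases Nat.eq_zero_or_pos n with rfl | hn
    · simp
    · have hnpos : (0:ℝ) < n := by exact_mod_cast hn
      have hnum : |(F ∘ Gf)^[n] 0 - F^[n] 0 - Gf^[n] 0| ≤ 2 := by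
        rw [abs_le]
        constructor <;> linarith
      exact (div_le_div_iff_of_pos_right hnpos).mpr hnum
  have := tendsto_nhds_unique hdiff hzero
  linarith

end RotAux




/-- For a compact subgroup `G` of the group of orientation-preserving
homeomorphisms of the circle `ℝ/ℤ`, the rotation-number map `ρ : G → ℝ/ℤ` — sending
`f ∈ G` to the translation number `lim (Fⁿ(x) - x)/n` of any strictly increasing
degree-one lift `F` of `f`, taken modulo `ℤ` — is a continuous injective group
homomorphism into the additive circle. -/
theorem rotation_number_continuous_injective_hom
    (G : Subgroup (UnitAddCircle ≃ₜ UnitAddCircle))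
    (hG : IsCompact (G : Set (UnitAddCircle ≃ₜ UnitAddCircle)))
    (hop : ∀ f ∈ G, ∃ F : ℝ → ℝ, StrictMono F ∧ (∀ x : ℝ, F (x + 1) = F x + 1) ∧
      ∀ x : ℝ, f (x : UnitAddCircle) = ((F x : ℝ) : UnitAddCircle)) :
    ∃ ρ : ↥G → UnitAddCircle,
      (∀ (f : ↥G) (F : ℝ → ℝ), StrictMono F → (∀ x : ℝ, F (x + 1) = F x + 1) →
        (∀ x : ℝ, (f : UnitAddCircle ≃ₜ UnitAddCircle) (x : UnitAddCircle)
          = ((F x : ℝ) : UnitAddCircle)) →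
        ∀ τ : ℝ, Filter.Tendsto (fun n : ℕ => (F^[n] 0 - 0) / n) Filter.atTop (nhds τ) →
          ρ f = ((τ : ℝ) : UnitAddCircle)) ∧
      Continuous ρ ∧ Function.Injective ρ ∧
      ∀ f g : ↥G, ρ (f * g) = ρ f + ρ g := by
  classical
  have hfree := RotAux.free G hG hop
  have hex : ∀ f : ↥G, ∃ F : ℝ → ℝ, RotAux.IsLift (↑f) F := fun f => hop ↑f f.2
  choose L hL using hex
  set ρ : ↥G → UnitAddCircle :=
    fun f => (((RotAux.toLift (hL f)).translationNumber : ℝ) : UnitAddCircle) with hρ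
  have hom : ∀ f g : ↥G, ρ (f * g) = ρ f + ρ g := by
    intro f g
    have hmul : RotAux.IsLift ((↑f : UnitAddCircle ≃ₜ UnitAddCircle) * ↑g) (L f ∘ L g) :=
      (hL f).mul (hL g)
    have h1 := RotAux.tau_coe_eq (f := (↑f : UnitAddCircle ≃ₜ UnitAddCircle) * ↑g)
      (hL (f * g)) hmul
    have h2 := RotAux.tau_add G hG hop f.2 g.2 (hL f) (hL g)
    simp only [hρ]
    rw [h1, h2, AddCircle.coe_add]
  have spec : ∀ (f : ↥G) (F : ℝ → ℝ), StrictMono F → (∀ x : ℝ, F (x + 1) = F x + 1) →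
      (∀ x : ℝ, (f : UnitAddCircle ≃ₜ UnitAddCircle) (x : UnitAddCircle)
        = ((F x : ℝ) : UnitAddCircle)) →
      ∀ t : ℝ, Filter.Tendsto (fun n : ℕ => (F^[n] 0 - 0) / n) Filter.atTop (nhds t) →
        ρ f = ((t : ℝ) : UnitAddCircle) := by
    intro f F h1 h2 h3 t ht
    have hIs : RotAux.IsLift (↑f) F := ⟨h1, h2, h3⟩
    have ht' : Tendsto (fun n : ℕ => (F^[n] 0) / n) atTop (𝓝 t) :=
      ht.congr fun n => by rw [sub_zero]
    have heq : (RotAux.toLift hIs).translationNumber = t :=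
      tendsto_nhds_unique (RotAux.tendsto_tau hIs) ht'
    simp only [hρ]
    rw [← heq]
    exact RotAux.tau_coe_eq (hL f) hIs
  have hinj : Function.Injective ρ := by
    intro f g hfg
    have h0 : ρ (f * g⁻¹) = 0 := by
      have h1 := hom (f * g⁻¹) g
      rw [inv_mul_cancel_right, hfg] at h1
      exact (right_eq_add.mp h1)
    have hcoe : (((RotAux.toLift (hL (f * g⁻¹))).translationNumber : ℝ) : UnitAddCircle) = 0 := by
      simpa [hρ] using h0
    obtain ⟨m, hm⟩ := (AddCircle.coe_eq_zero_iff (1:ℝ)).1 hcoe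
    have hτ : (RotAux.toLift (hL (f * g⁻¹))).translationNumber = (m : ℝ) := by
      rw [← hm]; simp
    have hcont2 : Continuous (RotAux.toLift (hL (f * g⁻¹))) := (hL (f * g⁻¹)).continuous
    obtain ⟨x, hx⟩ :=
      ((RotAux.toLift (hL (f * g⁻¹))).translationNumber_eq_int_iff hcont2).1 hτ
    have hfix : (↑(f * g⁻¹) : UnitAddCircle ≃ₜ UnitAddCircle) ((x:ℝ) : UnitAddCircle)
        = ((x:ℝ) : UnitAddCircle) := by
      rw [(hL (f * g⁻¹)).2.2 x]
      show ((L (f * g⁻¹) x : ℝ) : UnitAddCircle) = _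
      rw [show L (f * g⁻¹) x = x + (m:ℝ) from hx, RotAux.coe_add_int]
    have hu1 : (↑(f * g⁻¹) : UnitAddCircle ≃ₜ UnitAddCircle) = 1 :=
      hfree ↑(f * g⁻¹) (f * g⁻¹).2 ⟨_, hfix⟩
    have hu2 : f * g⁻¹ = 1 := OneMemClass.coe_eq_one.mp hu1
    exact mul_inv_eq_one.mp hu2
  have hcont : Continuous ρ := by
    rw [Metric.continuous_iff]
    intro f ε hε
    refine ⟨min ε (1/3), lt_min hε (by norm_num), ?_⟩
    intro g hdist
    set u := g * f⁻¹ with hu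
    have hc3 : dist g f < 1/3 := lt_of_lt_of_le hdist (min_le_right _ _)
    have hcε : dist g f < ε := lt_of_lt_of_le hdist (min_le_left _ _)
    have hc0 : (0:ℝ) ≤ dist g f := dist_nonneg
    have hpt : ∀ z : UnitAddCircle,
        dist ((↑u : UnitAddCircle ≃ₜ UnitAddCircle) z) z ≤ dist g f := by
      intro z
      have h2 : (↑f : UnitAddCircle ≃ₜ UnitAddCircle)
          (((↑f : UnitAddCircle ≃ₜ UnitAddCircle))⁻¹ z) = z := by
        rw [← Homeomorph.mul_apply', mul_inv_cancel, Homeomorph.one_apply']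
      have h1 : dist ((↑u : UnitAddCircle ≃ₜ UnitAddCircle) z) z
          = dist ((↑g : UnitAddCircle ≃ₜ UnitAddCircle)
              (((↑f : UnitAddCircle ≃ₜ UnitAddCircle))⁻¹ z))
            ((↑f : UnitAddCircle ≃ₜ UnitAddCircle)
              (((↑f : UnitAddCircle ≃ₜ UnitAddCircle))⁻¹ z)) := by
        rw [h2]; rfl
      rw [h1, Subtype.dist_eq]
      exact ContinuousMap.dist_apply_le_dist
        (f := ((↑g : UnitAddCircle ≃ₜ UnitAddCircle) : C(UnitAddCircle, UnitAddCircle)))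
        (g := ((↑f : UnitAddCircle ≃ₜ UnitAddCircle) : C(UnitAddCircle, UnitAddCircle))) _
    have hecont : Continuous fun x : ℝ => L u x - x := (hL u).continuous.sub continuous_id
    have hres : ∀ x : ℝ, |(L u x - x) - round (L u x - x)| ≤ dist g f := by
      intro x
      have h1 := hpt ((x:ℝ) : UnitAddCircle)
      rw [(hL u).2.2 x, dist_eq_norm, ← AddCircle.coe_sub, UnitAddCircle.norm_eq] at h1
      exact h1
    set k := round (L u 0 - 0) with hk
    have hSuniv : {x : ℝ | |(L u x - x) - k| ≤ dist g f} = Set.univ := by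
      have hclosed : IsClosed {x : ℝ | |(L u x - x) - k| ≤ dist g f} :=
        isClosed_le ((hecont.sub continuous_const).abs) continuous_const
      have hopen : IsOpen {x : ℝ | |(L u x - x) - k| ≤ dist g f} := by
        rw [isOpen_iff_mem_nhds]
        intro x hx
        obtain ⟨δ, hδ0, hδ⟩ := Metric.continuousAt_iff.mp hecont.continuousAt
          (1 - 2 * dist g f) (by linarith)
        rw [Metric.mem_nhds_iff]
        refine ⟨δ, hδ0, fun y hy => ?_⟩
        have h1 : |(L u y - y) - (L u x - x)| < 1 - 2 * dist g f := by
          have := hδ hy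
          rwa [Real.dist_eq] at this
        have hx' : |(L u x - x) - (k:ℝ)| ≤ dist g f := hx
        have h2 : |(L u y - y) - (k:ℝ)| < 1 - dist g f := by
          calc |(L u y - y) - (k:ℝ)|
              ≤ |(L u y - y) - (L u x - x)| + |(L u x - x) - (k:ℝ)| := abs_sub_le _ _ _
            _ < (1 - 2 * dist g f) + dist g f := add_lt_add_of_lt_of_le h1 hx'
            _ = 1 - dist g f := by ring
        have h3 := hres y
        have h4 : |((round (L u y - y) : ℤ) : ℝ) - (k:ℝ)| < 1 := by
          calc |((round (L u y - y) : ℤ) : ℝ) - (k:ℝ)|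
              ≤ |((round (L u y - y) : ℤ) : ℝ) - (L u y - y)| + |(L u y - y) - (k:ℝ)| :=
                abs_sub_le _ _ _
            _ < dist g f + (1 - dist g f) := by
                have h5 : |((round (L u y - y) : ℤ) : ℝ) - (L u y - y)| ≤ dist g f := by
                  rw [abs_sub_comm]; exact h3
                exact add_lt_add_of_le_of_lt h5 h2
            _ = 1 := by ring
        have h6 : round (L u y - y) = k := by
          have h7 : |(round (L u y - y) - k : ℤ)| < 1 := by
            have : |((round (L u y - y) - k : ℤ) : ℝ)| < 1 := by push_cast; exact h4
            exact_mod_cast this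
          have h8 := abs_lt.mp h7
          omega
        show |(L u y - y) - (k:ℝ)| ≤ dist g f
        rw [← h6]
        exact hres y
      rcases isClopen_iff.mp ⟨hclosed, hopen⟩ with hemp | huniv
      · exfalso
        have h0 : (0:ℝ) ∈ {x : ℝ | |(L u x - x) - k| ≤ dist g f} := by
          show |(L u 0 - 0) - (k:ℝ)| ≤ dist g f
          rw [hk]
          exact hres 0
        rw [hemp] at h0
        exact h0
      · exact huniv
    have hbound : ∀ x : ℝ, |(L u x - x) - (k:ℝ)| ≤ dist g f := by
      intro x
      have hmem : x ∈ {x : ℝ | |(L u x - x) - k| ≤ dist g f} := by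
        rw [hSuniv]; exact Set.mem_univ x
      exact hmem
    have hUIs : RotAux.IsLift (↑u) (fun x => L u x + ((-k : ℤ) : ℝ)) := (hL u).add_int (-k)
    have hup : ∀ x, (fun x => L u x + ((-k : ℤ) : ℝ)) x ≤ x + dist g f := by
      intro x
      have h9 := (abs_le.mp (hbound x)).2
      show L u x + ((-k : ℤ) : ℝ) ≤ x + dist g f
      push_cast
      linarith
    have hlo : ∀ x, x + -(dist g f) ≤ (fun x => L u x + ((-k : ℤ) : ℝ)) x := by
      intro x
      have h9 := (abs_le.mp (hbound x)).1
      show x + -(dist g f) ≤ L u x + ((-k : ℤ) : ℝ)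
      push_cast
      linarith
    have hτub := (RotAux.toLift hUIs).translationNumber_le_of_le_add hup
    have hτlb := (RotAux.toLift hUIs).le_translationNumber_of_add_le hlo
    have hρu : ρ u = (((RotAux.toLift hUIs).translationNumber : ℝ) : UnitAddCircle) := by
      simp only [hρ]
      exact RotAux.tau_coe_eq (hL u) hUIs
    have hgf : ρ g = ρ u + ρ f := by
      have h1 := hom u f
      rw [show u * f = g from by rw [hu, inv_mul_cancel_right]] at h1
      exact h1
    calc dist (ρ g) (ρ f) = ‖ρ u‖ := by rw [hgf, dist_eq_norm, add_sub_cancel_right]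
      _ ≤ ‖(RotAux.toLift hUIs).translationNumber‖ := by
          rw [hρu]
          exact QuotientAddGroup.norm_mk_le_norm
      _ ≤ dist g f := by
          rw [Real.norm_eq_abs, abs_le]
          exact ⟨hτlb, hτub⟩
      _ < ε := hcε
  exact ⟨ρ, spec, hcont, hinj, hom⟩
end
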